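/- Let n ≥ 3 and let V be a finite subset of ℝⁿ spanning ℝⁿ such that every belt of the zonotope Z(V) consists of exactly four facets. Then Z(V) is the image of the cube [−1,1]ⁿ under an invertible linear transformation. -/

import Mathlib

open Set

/-- `F` is a face of the polytope `P`: it is empty, all of `P`, or the set of
maximizers in `P` of some linear functional. -/
def IsFace {V : Type*} [AddCommGroup V] [Module ℝ V] (P F : Set V) : Prop :=
  F = ∅ ∨ F = P ∨ ∃ u : V →ₗ[ℝ] ℝ, F = {x ∈ P | ∀ y ∈ P, u y ≤ u x}

/-- The (affine) dimension of a set. -/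
noncomputable def adim {V : Type*} [AddCommGroup V] [Module ℝ V] (S : Set V) : ℕ :=
  Module.finrank ℝ (affineSpan ℝ S).direction

/-- The zonotope generated by a finite set of vectors `V`. -/
def zono {n : ℕ} (V : Finset (Fin n → ℝ)) : Set (Fin n → ℝ) :=
  {x | ∃ l : (Fin n → ℝ) → ℝ, (∀ v ∈ V, l v ∈ Icc (-1 : ℝ) 1) ∧ x = ∑ v ∈ V, l v • v}

/-- The belt of an `(n−2)`-dimensional face `G` of a polytope `P ⊆ ℝⁿ`: the set of
facets of `P` containing a translate of `G` or of `−G`. -/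
def belt {n : ℕ} (P G : Set (Fin n → ℝ)) : Set (Set (Fin n → ℝ)) :=
  {F | IsFace P F ∧ F.Nonempty ∧ adim F = n - 1 ∧
    ∃ t : Fin n → ℝ, ((fun x => t + x) '' G ⊆ F ∨ (fun x => t + -x) '' G ⊆ F)}

open scoped Classical

section Aux

lemma zero_mem_zono {n : ℕ} (V : Finset (Fin n → ℝ)) : (0 : Fin n → ℝ) ∈ zono V := by
  exact ⟨0, fun v _ => by norm_num, by simp⟩

lemma mem_zono_of_mem {n : ℕ} {V : Finset (Fin n → ℝ)} {v : Fin n → ℝ} (hv : v ∈ V) :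
    v ∈ zono V := by
  refine ⟨fun w => if w = v then 1 else 0, fun w _ => ?_, ?_⟩
  · dsimp only; split <;> norm_num
  · rw [Finset.sum_eq_single v]
    · simp
    · intro b _ hb; simp [hb]
    · intro h; exact absurd hv h

lemma zono_mono {n : ℕ} {S T : Finset (Fin n → ℝ)} (h : S ⊆ T) : zono S ⊆ zono T := by
  rintro x ⟨l, hl, rfl⟩
  refine ⟨fun v => if v ∈ S then l v else 0, fun v _ => ?_, ?_⟩
  · dsimp only; split
    · exact hl v ‹_›
    · norm_num
  · rw [← Finset.sum_subset h]
    · exact Finset.sum_congr rfl (fun v hv => by simp [hv])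
    · intro v _ hv; simp [hv]

lemma zono_subset_span {n : ℕ} (V : Finset (Fin n → ℝ)) :
    zono V ⊆ (Submodule.span ℝ (V : Set (Fin n → ℝ)) : Submodule ℝ (Fin n → ℝ)) := by
  rintro x ⟨l, _, rfl⟩
  exact Submodule.sum_mem _ fun v hv =>
    Submodule.smul_mem _ _ (Submodule.subset_span hv)

lemma span_zono {n : ℕ} (V : Finset (Fin n → ℝ)) :
    Submodule.span ℝ (zono V) = Submodule.span ℝ (V : Set (Fin n → ℝ)) := by
  apply le_antisymm
  · rw [Submodule.span_le]
    exact zono_subset_span V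
  · exact Submodule.span_mono (fun v hv => mem_zono_of_mem hv)

lemma direction_affineSpan_translate_zono {n : ℕ} (t : Fin n → ℝ) (V : Finset (Fin n → ℝ)) :
    (affineSpan ℝ ((fun x => t + x) '' zono V)).direction
      = Submodule.span ℝ (V : Set (Fin n → ℝ)) := by
  rw [direction_affineSpan]
  have h1 : vectorSpan ℝ ((fun x => t + x) '' zono V) = vectorSpan ℝ (zono V) := by
    unfold vectorSpan
    congr 1
    ext x
    constructor
    · rintro ⟨a, ⟨a', ha', rfl⟩, b, ⟨b', hb', rfl⟩, rfl⟩
      exact ⟨a', ha', b', hb', by simp [vsub_eq_sub]⟩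
    · rintro ⟨a, ha, b, hb, rfl⟩
      exact ⟨t + a, ⟨a, ha, rfl⟩, t + b, ⟨b, hb, rfl⟩, by simp [vsub_eq_sub]⟩
  rw [h1]
  rw [← span_zono]
  apply le_antisymm
  · rw [vectorSpan, Submodule.span_le]
    rintro x ⟨a, ha, b, hb, rfl⟩
    exact Submodule.sub_mem _ (Submodule.subset_span ha) (Submodule.subset_span hb)
  · rw [Submodule.span_le]
    intro x hx
    have : x - 0 ∈ vectorSpan ℝ (zono V) :=
      Submodule.subset_span (Set.sub_mem_sub hx (zero_mem_zono V))
    simpa using this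

lemma rsign_mul_self (a : ℝ) : Real.sign a * a = |a| := by
  rcases lt_trichotomy a 0 with h | h | h
  · rw [Real.sign_of_neg h, abs_of_neg h]; ring
  · simp [h]
  · rw [Real.sign_of_pos h, abs_of_pos h]; ring

lemma abs_rsign_le_one (a : ℝ) : |Real.sign a| ≤ 1 := by
  rcases lt_trichotomy a 0 with h | h | h
  · rw [Real.sign_of_neg h]; norm_num
  · simp [h]
  · rw [Real.sign_of_pos h]; norm_num

lemma sign_mem_Icc (a : ℝ) : Real.sign a ∈ Icc (-1 : ℝ) 1 := by
  rw [Set.mem_Icc, ← abs_le]; exact abs_rsign_le_one a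

noncomputable def sv {n : ℕ} (u : (Fin n → ℝ) →ₗ[ℝ] ℝ) (V : Finset (Fin n → ℝ)) :
    Fin n → ℝ := ∑ v ∈ V, Real.sign (u v) • v

lemma u_le_max {n : ℕ} (u : (Fin n → ℝ) →ₗ[ℝ] ℝ) (V : Finset (Fin n → ℝ)) :
    ∀ y ∈ zono V, u y ≤ ∑ v ∈ V, |u v| := by
  rintro y ⟨l, hl, rfl⟩
  rw [map_sum]
  apply Finset.sum_le_sum
  intro v hv
  rw [map_smul, smul_eq_mul]
  calc l v * u v ≤ |l v * u v| := le_abs_self _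
    _ = |l v| * |u v| := abs_mul _ _
    _ ≤ 1 * |u v| := by
        apply mul_le_mul_of_nonneg_right _ (abs_nonneg _)
        rw [abs_le]; exact ⟨(hl v hv).1, (hl v hv).2⟩
    _ = |u v| := one_mul _

lemma sv_mem_zono {n : ℕ} (u : (Fin n → ℝ) →ₗ[ℝ] ℝ) (V : Finset (Fin n → ℝ)) :
    sv u V ∈ zono V :=
  ⟨fun v => Real.sign (u v), fun v _ => sign_mem_Icc _, rfl⟩

lemma u_sv {n : ℕ} (u : (Fin n → ℝ) →ₗ[ℝ] ℝ) (V : Finset (Fin n → ℝ)) :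
    u (sv u V) = ∑ v ∈ V, |u v| := by
  unfold sv
  rw [map_sum]
  exact Finset.sum_congr rfl fun v _ => by rw [map_smul, smul_eq_mul, rsign_mul_self]

end Aux
lemma face_eq {n : ℕ} (u : (Fin n → ℝ) →ₗ[ℝ] ℝ) (V : Finset (Fin n → ℝ)) :
    {x ∈ zono V | ∀ y ∈ zono V, u y ≤ u x}
      = (fun x => sv u V + x) '' zono (V.filter (fun v => u v = 0)) := by
  ext x
  constructor
  · rintro ⟨⟨l, hl, rfl⟩, hx⟩
    have hle := u_le_max u V _ ⟨l, hl, rfl⟩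
    have hge : (∑ v ∈ V, |u v|) ≤ u (∑ v ∈ V, l v • v) := by
      calc (∑ v ∈ V, |u v|) = u (sv u V) := (u_sv u V).symm
        _ ≤ u (∑ v ∈ V, l v • v) := hx _ (sv_mem_zono u V)
    have heq : u (∑ v ∈ V, l v • v) = ∑ v ∈ V, |u v| := le_antisymm hle hge
    have hterm : ∀ v ∈ V, |u v| - l v * u v = 0 := by
      rw [← Finset.sum_eq_zero_iff_of_nonneg]
      · rw [Finset.sum_sub_distrib]
        have : ∑ v ∈ V, l v * u v = ∑ v ∈ V, |u v| := by
          rw [← heq, map_sum]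
          exact Finset.sum_congr rfl fun v _ => by rw [map_smul, smul_eq_mul]
        rw [this]; ring
      · intro v hv
        have : l v * u v ≤ |u v| := by
          calc l v * u v ≤ |l v * u v| := le_abs_self _
            _ = |l v| * |u v| := abs_mul _ _
            _ ≤ 1 * |u v| := by
                apply mul_le_mul_of_nonneg_right _ (abs_nonneg _)
                rw [abs_le]; exact ⟨(hl v hv).1, (hl v hv).2⟩
            _ = |u v| := one_mul _
        linarith
    have hsign : ∀ v ∈ V, u v ≠ 0 → l v = Real.sign (u v) := by
      intro v hv huv
      have h1 : l v * u v = |u v| := by have := hterm v hv; linarith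
      have h2 : Real.sign (u v) * u v = |u v| := rsign_mul_self _
      have : (l v - Real.sign (u v)) * u v = 0 := by rw [sub_mul, h1, h2]; ring
      rcases mul_eq_zero.mp this with h | h
      · linarith
      · exact absurd h huv
    refine ⟨∑ v ∈ V.filter (fun v => u v = 0), l v • v, ⟨l, fun v hv => hl v (Finset.mem_filter.mp hv).1, rfl⟩, ?_⟩
    have key : ∑ v ∈ V.filter (fun v => u v = 0), l v • v
        = ∑ v ∈ V, (l v - Real.sign (u v)) • v := by
      have h1 : ∑ v ∈ V.filter (fun v => u v = 0), (l v - Real.sign (u v)) • v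
          = ∑ v ∈ V, (l v - Real.sign (u v)) • v := by
        apply Finset.sum_filter_of_ne
        intro v hv hne
        by_contra h
        apply hne
        rw [hsign v hv h, sub_self, zero_smul]
      rw [← h1]
      apply Finset.sum_congr rfl
      intro v hv
      rw [(Finset.mem_filter.mp hv).2, Real.sign_zero, sub_zero]
    rw [key]
    show sv u V + _ = _
    unfold sv
    rw [← Finset.sum_add_distrib]
    apply Finset.sum_congr rfl
    intro v hv
    rw [← add_smul]
    ring_nf
  · rintro ⟨z, ⟨m, hm, rfl⟩, rfl⟩
    set l : (Fin n → ℝ) → ℝ := fun v => if u v = 0 then m v else Real.sign (u v) with hldef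
    have hsum : sv u V + ∑ v ∈ V.filter (fun v => u v = 0), m v • v = ∑ v ∈ V, l v • v := by
      rw [← Finset.sum_filter_add_sum_filter_not V (fun v => u v = 0) (fun v => l v • v)]
      have e1 : ∑ v ∈ V.filter (fun v => u v = 0), l v • v
          = ∑ v ∈ V.filter (fun v => u v = 0), m v • v := by
        apply Finset.sum_congr rfl
        intro v hv
        simp [hldef, (Finset.mem_filter.mp hv).2]
      have e2 : ∑ v ∈ V.filter (fun v => ¬ u v = 0), l v • v
          = ∑ v ∈ V.filter (fun v => ¬ u v = 0), Real.sign (u v) • v := by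
        apply Finset.sum_congr rfl
        intro v hv
        simp [hldef, (Finset.mem_filter.mp hv).2]
      have e3 : sv u V = ∑ v ∈ V.filter (fun v => ¬ u v = 0), Real.sign (u v) • v := by
        unfold sv
        rw [← Finset.sum_filter_add_sum_filter_not V (fun v => u v = 0)
          (fun v => Real.sign (u v) • v)]
        have : ∑ v ∈ V.filter (fun v => u v = 0), Real.sign (u v) • v = 0 := by
          apply Finset.sum_eq_zero
          intro v hv
          rw [(Finset.mem_filter.mp hv).2, Real.sign_zero, zero_smul]
        rw [this, zero_add]
      rw [e1, e2, e3]
      abel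
    have hmem : sv u V + ∑ v ∈ V.filter (fun v => u v = 0), m v • v ∈ zono V := by
      rw [hsum]
      refine ⟨l, fun v hv => ?_, rfl⟩
      by_cases h : u v = 0
      · simp only [hldef, if_pos h]
        exact hm v (Finset.mem_filter.mpr ⟨hv, h⟩)
      · simp only [hldef, if_neg h]
        exact sign_mem_Icc _
    refine ⟨hmem, ?_⟩
    intro y hy
    have h1 : u (sv u V + ∑ v ∈ V.filter (fun v => u v = 0), m v • v) = ∑ v ∈ V, |u v| := by
      rw [map_add, u_sv]
      have : u (∑ v ∈ V.filter (fun v => u v = 0), m v • v) = 0 := by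
        rw [map_sum]
        apply Finset.sum_eq_zero
        intro v hv
        rw [map_smul, smul_eq_mul, (Finset.mem_filter.mp hv).2, mul_zero]
      rw [this, add_zero]
    rw [h1]
    exact u_le_max u V y hy

lemma face_isFace {n : ℕ} (u : (Fin n → ℝ) →ₗ[ℝ] ℝ) (V : Finset (Fin n → ℝ)) :
    IsFace (zono V) {x ∈ zono V | ∀ y ∈ zono V, u y ≤ u x} :=
  Or.inr (Or.inr ⟨u, rfl⟩)

lemma face_nonempty {n : ℕ} (u : (Fin n → ℝ) →ₗ[ℝ] ℝ) (V : Finset (Fin n → ℝ)) :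
    {x ∈ zono V | ∀ y ∈ zono V, u y ≤ u x}.Nonempty := by
  rw [face_eq]
  exact ⟨sv u V + 0, ⟨0, zero_mem_zono _, rfl⟩⟩

lemma face_direction {n : ℕ} (u : (Fin n → ℝ) →ₗ[ℝ] ℝ) (V : Finset (Fin n → ℝ)) :
    (affineSpan ℝ {x ∈ zono V | ∀ y ∈ zono V, u y ≤ u x}).direction
      = Submodule.span ℝ ((V.filter (fun v => u v = 0) : Finset (Fin n → ℝ)) : Set (Fin n → ℝ)) := by
  rw [face_eq, direction_affineSpan_translate_zono]

lemma face_adim {n : ℕ} (u : (Fin n → ℝ) →ₗ[ℝ] ℝ) (V : Finset (Fin n → ℝ)) :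
    adim {x ∈ zono V | ∀ y ∈ zono V, u y ≤ u x}
      = Module.finrank ℝ
        (Submodule.span ℝ ((V.filter (fun v => u v = 0) : Finset (Fin n → ℝ)) : Set (Fin n → ℝ))) := by
  unfold adim
  rw [face_direction]

lemma sv_sum_pos {n : ℕ} (u : (Fin n → ℝ) →ₗ[ℝ] ℝ) (V : Finset (Fin n → ℝ))
    {v : Fin n → ℝ} (hv : v ∈ V) (hu : u v ≠ 0) : 0 < ∑ w ∈ V, |u w| := by
  have h1 : |u v| ≤ ∑ w ∈ V, |u w| :=
    Finset.single_le_sum (f := fun w => |u w|) (fun w _ => abs_nonneg _) hv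
  have h2 : 0 < |u v| := abs_pos.mpr hu
  linarith

/-- The two opposite faces in a direction with some nonvanishing value are distinct. -/
lemma face_ne_neg {n : ℕ} (u u' : (Fin n → ℝ) →ₗ[ℝ] ℝ) (V : Finset (Fin n → ℝ))
    (huu' : ∀ x, u' x = - u x) {v : Fin n → ℝ} (hv : v ∈ V) (hu : u v ≠ 0) :
    {x ∈ zono V | ∀ y ∈ zono V, u y ≤ u x} ≠ {x ∈ zono V | ∀ y ∈ zono V, u' y ≤ u' x} := by
  intro heq
  have h1 : sv u V ∈ {x ∈ zono V | ∀ y ∈ zono V, u y ≤ u x} := by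
    refine ⟨sv_mem_zono u V, ?_⟩
    intro y hy
    rw [u_sv]
    exact u_le_max u V y hy
  rw [heq] at h1
  have h2 : u' (sv u' V) ≤ u' (sv u V) := h1.2 (sv u' V) (sv_mem_zono u' V)
  have h3 : u' (sv u' V) = ∑ w ∈ V, |u w| := by
    rw [u_sv]
    exact Finset.sum_congr rfl fun w _ => by rw [huu', abs_neg]
  have h4 : u' (sv u V) = - u (sv u V) := huu' _
  rw [h3, h4, u_sv] at h2
  have := sv_sum_pos u V hv hu
  linarith

lemma exists_basis_subset {n : ℕ} (V : Finset (Fin n → ℝ))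
    (hspan : Submodule.span ℝ (V : Set (Fin n → ℝ)) = ⊤) :
    ∃ B : Module.Basis (Fin n) ℝ (Fin n → ℝ), ∀ i, B i ∈ V := by
  obtain ⟨b, hbV, hbspan, hbind⟩ := exists_linearIndependent ℝ (V : Set (Fin n → ℝ))
  rw [hspan] at hbspan
  haveI : Fintype b := hbind.setFinite.fintype
  let B0 : Module.Basis b ℝ (Fin n → ℝ) :=
    Module.Basis.mk hbind (by rw [Subtype.range_coe, hbspan])
  have hcard : Fintype.card b = n := by
    rw [← Module.finrank_eq_card_basis B0, Module.finrank_fin_fun]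
  refine ⟨B0.reindex (Fintype.equivFinOfCardEq hcard), fun i => ?_⟩
  rw [Module.Basis.reindex_apply, Module.Basis.mk_apply]
  exact hbV (Subtype.coe_prop _)
lemma case_parallel {n : ℕ} (hn0 : 0 < n) (V : Finset (Fin n → ℝ)) (B : Module.Basis (Fin n) ℝ (Fin n → ℝ))
    (hB : ∀ i, B i ∈ V) (hpar : ∀ v ∈ V, ∃ i : Fin n, ∃ c : ℝ, v = c • B i) :
    ∃ A : (Fin n → ℝ) ≃ₗ[ℝ] (Fin n → ℝ),
      zono V = ⇑A '' {x : Fin n → ℝ | ∀ i, |x i| ≤ 1} := by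
  -- classifier
  have hex : ∀ v : Fin n → ℝ, ∃ p : Fin n × ℝ, v ∈ V → v = p.2 • B p.1 := by
    intro v
    by_cases h : v ∈ V
    · obtain ⟨i, c, hc⟩ := hpar v h
      exact ⟨(i, c), fun _ => hc⟩
    · exact ⟨(⟨0, hn0⟩, 0), fun hv => absurd hv h⟩
  choose p hp using hex
  set χ : (Fin n → ℝ) → Fin n := fun v => (p v).1 with hχ
  set γ : (Fin n → ℝ) → ℝ := fun v => (p v).2 with hγ
  have hrep : ∀ v ∈ V, v = γ v • B (χ v) := fun v hv => hp v hv
  have hχB : ∀ i, χ (B i) = i ∧ γ (B i) = 1 := by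
    intro i
    have h1 : B i = γ (B i) • B (χ (B i)) := hrep (B i) (hB i)
    have h2 := congrArg (fun w => (B.repr w) i) h1
    simp only [map_smul, Module.Basis.repr_self] at h2
    by_cases h : χ (B i) = i
    · refine ⟨h, ?_⟩
      rw [h] at h2
      simp at h2
      linarith
    · exfalso
      simp [Finsupp.single_apply, h] at h2
  set m : Fin n → ℝ := fun i => ∑ v ∈ V.filter (fun v => χ v = i), |γ v| with hm
  have hm1 : ∀ i, 1 ≤ m i := by
    intro i
    have hmem : B i ∈ V.filter (fun v => χ v = i) :=
      Finset.mem_filter.mpr ⟨hB i, (hχB i).1⟩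
    have := Finset.single_le_sum (f := fun v => |γ v|)
      (fun v _ => abs_nonneg _) hmem
    simp only [hm]
    simpa [(hχB i).2] using this
  have hmne : ∀ i, m i ≠ 0 := fun i => by linarith [hm1 i]
  have hmpos : ∀ i, 0 < m i := fun i => by linarith [hm1 i]
  set A : (Fin n → ℝ) ≃ₗ[ℝ] (Fin n → ℝ) :=
    (LinearEquiv.piCongrRight fun i => LinearEquiv.smulOfNeZero ℝ ℝ (m i) (hmne i)).trans
      B.equivFun.symm with hA
  have hAy : ∀ y : Fin n → ℝ, A y = ∑ i, (m i * y i) • B i := by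
    intro y
    rw [hA]
    simp only [LinearEquiv.trans_apply, Module.Basis.equivFun_symm_apply]
    rfl
  -- fiberwise sum lemma
  have hfiber : ∀ f : (Fin n → ℝ) → ℝ,
      ∑ v ∈ V, f v • B (χ v) = ∑ i, (∑ v ∈ V.filter (fun v => χ v = i), f v) • B i := by
    intro f
    rw [← Finset.sum_fiberwise_of_maps_to (fun v _ => Finset.mem_univ (χ v))
      (fun v => f v • B (χ v))]
    apply Finset.sum_congr rfl
    intro i _
    rw [Finset.sum_smul]
    apply Finset.sum_congr rfl
    intro v hv
    rw [(Finset.mem_filter.mp hv).2]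
  refine ⟨A, ?_⟩
  ext x
  constructor
  · rintro ⟨l, hl, rfl⟩
    set y : Fin n → ℝ := fun i => (∑ v ∈ V.filter (fun v => χ v = i), l v * γ v) / m i with hy
    refine ⟨y, ?_, ?_⟩
    · intro i
      rw [hy]
      simp only
      rw [abs_div, abs_of_pos (hmpos i), div_le_one (hmpos i)]
      calc |∑ v ∈ V.filter (fun v => χ v = i), l v * γ v|
          ≤ ∑ v ∈ V.filter (fun v => χ v = i), |l v * γ v| := Finset.abs_sum_le_sum_abs _ _
        _ ≤ ∑ v ∈ V.filter (fun v => χ v = i), |γ v| := by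
            apply Finset.sum_le_sum
            intro v hv
            rw [abs_mul]
            have hlv : |l v| ≤ 1 := by
              rw [abs_le]
              exact ⟨(hl v (Finset.mem_filter.mp hv).1).1, (hl v (Finset.mem_filter.mp hv).1).2⟩
            nlinarith [abs_nonneg (γ v), abs_nonneg (l v)]
        _ = m i := rfl
    · rw [hAy]
      have : ∑ v ∈ V, l v • v = ∑ v ∈ V, (l v * γ v) • B (χ v) := by
        apply Finset.sum_congr rfl
        intro v hv
        rw [mul_smul]
        congr 1
        exact hrep v hv
      rw [this, hfiber]
      apply Finset.sum_congr rfl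
      intro i _
      congr 1
      rw [hy]
      exact mul_div_cancel₀ _ (hmne i)
  · rintro ⟨y, hy, rfl⟩
    have hy' : ∀ i, |y i| ≤ 1 := hy
    set l : (Fin n → ℝ) → ℝ := fun v => y (χ v) * Real.sign (γ v) with hldef
    have habs : ∀ v, |l v| ≤ 1 := by
      intro v
      rw [hldef]
      simp only
      rw [abs_mul]
      calc |y (χ v)| * |Real.sign (γ v)| ≤ 1 * 1 :=
        mul_le_mul (hy' (χ v)) (abs_rsign_le_one (γ v)) (abs_nonneg _) zero_le_one
        _ = 1 := one_mul _
    refine ⟨l, fun v _ => ?_, ?_⟩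
    · rw [Set.mem_Icc, ← abs_le]
      exact habs v
    · rw [hAy]
      have e1 : ∑ v ∈ V, l v • v = ∑ v ∈ V, (y (χ v) * |γ v|) • B (χ v) := by
        apply Finset.sum_congr rfl
        intro v hv
        show (y (χ v) * Real.sign (γ v)) • v = _
        calc (y (χ v) * Real.sign (γ v)) • v
            = (y (χ v) * Real.sign (γ v)) • (γ v • B (χ v)) := by rw [← hrep v hv]
          _ = (y (χ v) * (Real.sign (γ v) * γ v)) • B (χ v) := by rw [smul_smul, mul_assoc]
          _ = (y (χ v) * |γ v|) • B (χ v) := by rw [rsign_mul_self]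
      rw [e1, hfiber (fun v => y (χ v) * |γ v|)]
      apply Finset.sum_congr rfl
      intro i _
      congr 1
      simp only [hm]
      rw [Finset.sum_mul]
      apply Finset.sum_congr rfl
      intro v hv
      rw [(Finset.mem_filter.mp hv).2]
      ring
-- appended after full.lean content
lemma case_nonparallel {n : ℕ} (hn : 3 ≤ n) (V : Finset (Fin n → ℝ))
    (B : Module.Basis (Fin n) ℝ (Fin n → ℝ)) (hB : ∀ i, B i ∈ V)
    (v₀ : Fin n → ℝ) (hv₀V : v₀ ∈ V) (hv₀ : ∀ (i : Fin n) (c : ℝ), v₀ ≠ c • B i)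
    (hbelt : ∀ G : Set (Fin n → ℝ), IsFace (zono V) G → G.Nonempty → adim G = n - 2 →
      (belt (zono V) G).ncard = 4) : False := by
  have hfr : Module.finrank ℝ (Fin n → ℝ) = n := Module.finrank_fin_fun ℝ
  set φ : Fin n → ((Fin n → ℝ) →ₗ[ℝ] ℝ) := fun i => B.coord i with hφ
  have hφB : ∀ i j : Fin n, φ i (B j) = if j = i then 1 else 0 := by
    intro i j
    simp only [hφ, Module.Basis.coord_apply, Module.Basis.repr_self, Finsupp.single_apply]
  have hφrepr : ∀ (i : Fin n) (v : Fin n → ℝ), φ i v = B.repr v i := by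
    intro i v; simp [hφ, Module.Basis.coord_apply]
  -- v₀ is nonzero with two nonzero coordinates
  have hv0ne : v₀ ≠ 0 := fun h => hv₀ ⟨0, by omega⟩ 0 (by rw [h]; simp)
  have ha1 : ∃ i, B.repr v₀ i ≠ 0 := by
    by_contra h
    push_neg at h
    apply hv0ne
    have := B.sum_repr v₀
    rw [← this]
    apply Finset.sum_eq_zero
    intro j _
    rw [h j, zero_smul]
  obtain ⟨i₁, hi₁⟩ := ha1
  have ha2 : ∃ i₂, i₂ ≠ i₁ ∧ B.repr v₀ i₂ ≠ 0 := by
    by_contra h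
    push_neg at h
    apply hv₀ i₁ (B.repr v₀ i₁)
    calc v₀ = ∑ j, B.repr v₀ j • B j := (B.sum_repr v₀).symm
      _ = B.repr v₀ i₁ • B i₁ :=
        Finset.sum_eq_single i₁ (fun b _ hb => by rw [h b hb, zero_smul])
          (fun hmem => absurd (Finset.mem_univ i₁) hmem)
  obtain ⟨i₂, hi₂₁, hi₂⟩ := ha2
  -- choose a generic α
  obtain ⟨α, hα⟩ := Infinite.exists_notMem_finset
    (V.image (fun v => -(φ i₂ v) / (φ i₁ v)))
  set u : (Fin n → ℝ) →ₗ[ℝ] ℝ := α • φ i₁ + φ i₂ with hu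
  have huapp : ∀ v, u v = α * φ i₁ v + φ i₂ v := by
    intro v; simp [hu]
  have hukey : ∀ v ∈ V, u v = 0 → φ i₁ v = 0 ∧ φ i₂ v = 0 := by
    intro v hv h0
    rw [huapp] at h0
    by_cases h1 : φ i₁ v = 0
    · refine ⟨h1, ?_⟩
      rw [h1] at h0; linarith
    · exfalso
      apply hα
      apply Finset.mem_image.mpr ⟨v, hv, ?_⟩
      field_simp
      linarith
  have huB : ∀ j, j ≠ i₁ → j ≠ i₂ → u (B j) = 0 := by
    intro j h1 h2
    rw [huapp, hφB, hφB, if_neg h1, if_neg h2]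
    ring
  -- the (n-2)-dimensional subspace K
  set S₀ : Set (Fin n → ℝ) := B '' {j | j ≠ i₁ ∧ j ≠ i₂} with hS₀
  set K : Submodule ℝ (Fin n → ℝ) := Submodule.span ℝ S₀ with hK
  have hKker : ∀ i : Fin n, (i = i₁ ∨ i = i₂) → K ≤ LinearMap.ker (φ i) := by
    intro i hi
    rw [hK, Submodule.span_le]
    rintro x ⟨j, ⟨hj1, hj2⟩, rfl⟩
    rw [SetLike.mem_coe, LinearMap.mem_ker, hφB, if_neg]
    rcases hi with rfl | rfl
    exacts [hj1, hj2]
  have hS₀ind : LinearIndependent ℝ ((↑) : S₀ → (Fin n → ℝ)) := by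
    apply (B.linearIndependent.linearIndepOn_id).mono
    rintro x ⟨j, _, rfl⟩
    exact ⟨j, rfl⟩
  haveI : Fintype S₀ := hS₀ind.setFinite.fintype
  have hKrank : Module.finrank ℝ K = n - 2 := by
    rw [hK, finrank_span_set_eq_card hS₀ind]
    have h1 : S₀.toFinset = Finset.image B ({i₁, i₂}ᶜ : Finset (Fin n)) := by
      ext x
      simp only [Set.mem_toFinset, hS₀, Set.mem_image, Set.mem_setOf_eq, Finset.mem_image,
        Finset.mem_compl, Finset.mem_insert, Finset.mem_singleton]
      constructor
      · rintro ⟨j, ⟨hj1, hj2⟩, rfl⟩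
        exact ⟨j, by tauto, rfl⟩
      · rintro ⟨j, hj, rfl⟩
        exact ⟨j, ⟨fun h => hj (Or.inl h), fun h => hj (Or.inr h)⟩, rfl⟩
    rw [h1, Finset.card_image_of_injective _ B.injective, Finset.card_compl,
      Finset.card_insert_of_notMem (by simp [hi₂₁.symm]), Finset.card_singleton,
      Fintype.card_fin]
  have hmemK : ∀ v : Fin n → ℝ, φ i₁ v = 0 → φ i₂ v = 0 → v ∈ K := by
    intro v h1 h2
    rw [← B.sum_repr v]
    apply Submodule.sum_mem
    intro j _
    by_cases hj1 : j = i₁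
    · subst hj1
      rw [← hφrepr, h1, zero_smul]
      exact Submodule.zero_mem _
    by_cases hj2 : j = i₂
    · subst hj2
      rw [← hφrepr, h2, zero_smul]
      exact Submodule.zero_mem _
    · exact Submodule.smul_mem _ _ (Submodule.subset_span ⟨j, ⟨hj1, hj2⟩, rfl⟩)
  -- the face G
  set G : Set (Fin n → ℝ) := {x ∈ zono V | ∀ y ∈ zono V, u y ≤ u x} with hG
  have hGspan : Submodule.span ℝ
      ((V.filter (fun v => u v = 0) : Finset (Fin n → ℝ)) : Set (Fin n → ℝ)) = K := by
    apply le_antisymm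
    · rw [Submodule.span_le]
      intro v hv
      rw [Finset.mem_coe, Finset.mem_filter] at hv
      obtain ⟨h1, h2⟩ := hukey v hv.1 hv.2
      exact hmemK v h1 h2
    · rw [hK, Submodule.span_le]
      rintro x ⟨j, ⟨hj1, hj2⟩, rfl⟩
      apply Submodule.subset_span
      rw [Finset.mem_coe, Finset.mem_filter]
      exact ⟨hB j, huB j hj1 hj2⟩
  have hGadim : adim G = n - 2 := by
    rw [hG, face_adim, hGspan, hKrank]
  have h4 := hbelt G (face_isFace u V) (face_nonempty u V) hGadim
  -- facets: generic construction
  have hKsup : ∀ z : Fin n → ℝ, z ∉ K →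
      Module.finrank ℝ (K ⊔ Submodule.span ℝ {z} : Submodule ℝ (Fin n → ℝ)) = n - 1 := by
    intro z hz
    have hzne : z ≠ 0 := fun h => hz (h ▸ Submodule.zero_mem K)
    have hinf : K ⊓ Submodule.span ℝ {z} = ⊥ := by
      rw [eq_bot_iff]
      rintro x ⟨hx1, hx2⟩
      obtain ⟨c, rfl⟩ := Submodule.mem_span_singleton.mp hx2
      by_cases hc : c = 0
      · simp [hc]
      · exfalso
        apply hz
        have := Submodule.smul_mem K c⁻¹ hx1
        rwa [smul_smul, inv_mul_cancel₀ hc, one_smul] at this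
    have := Submodule.finrank_sup_add_finrank_inf_eq K (Submodule.span ℝ {z})
    rw [hinf, hKrank, finrank_span_singleton hzne] at this
    simp at this
    omega
  have hfacet : ∀ w : (Fin n → ℝ) →ₗ[ℝ] ℝ, ∀ z : Fin n → ℝ,
      (∀ v ∈ V, u v = 0 → w v = 0) → (∀ j, j ≠ i₁ → j ≠ i₂ → w (B j) = 0) →
      z ∈ V → w z = 0 → z ∉ K → w ≠ 0 →
      {x ∈ zono V | ∀ y ∈ zono V, w y ≤ w x} ∈ belt (zono V) G := by
    intro w z hwu hwB hzV hwz hzK hwne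
    refine ⟨face_isFace w V, face_nonempty w V, ?_, ?_⟩
    · -- adim = n - 1
      rw [face_adim]
      have hupper : Submodule.span ℝ
          ((V.filter (fun v => w v = 0) : Finset (Fin n → ℝ)) : Set (Fin n → ℝ))
          ≤ LinearMap.ker w := by
        rw [Submodule.span_le]
        intro v hv
        rw [Finset.mem_coe, Finset.mem_filter] at hv
        exact hv.2
      have hkerrank : Module.finrank ℝ (LinearMap.ker w) = n - 1 := by
        have := Module.Dual.finrank_ker_add_one_of_ne_zero hwne
        rw [hfr] at this
        omega
      have hlower : (K ⊔ Submodule.span ℝ {z} : Submodule ℝ (Fin n → ℝ))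
          ≤ Submodule.span ℝ
            ((V.filter (fun v => w v = 0) : Finset (Fin n → ℝ)) : Set (Fin n → ℝ)) := by
        apply sup_le
        · rw [hK, Submodule.span_le]
          rintro x ⟨j, ⟨hj1, hj2⟩, rfl⟩
          apply Submodule.subset_span
          rw [Finset.mem_coe, Finset.mem_filter]
          exact ⟨hB j, hwB j hj1 hj2⟩
        · rw [Submodule.span_le]
          rintro x rfl
          apply Submodule.subset_span
          rw [Finset.mem_coe, Finset.mem_filter]
          exact ⟨hzV, hwz⟩
      have hle1 := Submodule.finrank_mono hupper
      have hle2 := Submodule.finrank_mono hlower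
      rw [hkerrank] at hle1
      rw [hKsup z hzK] at hle2
      omega
    · -- translate of G inside
      refine ⟨sv w V - sv u V, Or.inl ?_⟩
      rintro x ⟨g, hg, rfl⟩
      rw [hG, face_eq] at hg
      obtain ⟨z0, hz0, rfl⟩ := hg
      rw [face_eq]
      refine ⟨z0, zono_mono ?_ hz0, ?_⟩
      · intro v hv
        rw [Finset.mem_filter] at hv ⊢
        exact ⟨hv.1, hwu v hv.1 hv.2⟩
      · show sv w V + z0 = (sv w V - sv u V) + (sv u V + z0)
        abel
  -- distinctness via directions
  have hdir_ne : ∀ w w' : (Fin n → ℝ) →ₗ[ℝ] ℝ, ∀ ξ : Fin n → ℝ,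
      ξ ∈ V → w ξ = 0 → w' ξ ≠ 0 →
      {x ∈ zono V | ∀ y ∈ zono V, w y ≤ w x} ≠ {x ∈ zono V | ∀ y ∈ zono V, w' y ≤ w' x} := by
    intro w w' ξ hξV hwξ hw'ξ heq
    have h1 : (affineSpan ℝ {x ∈ zono V | ∀ y ∈ zono V, w y ≤ w x}).direction
        = (affineSpan ℝ {x ∈ zono V | ∀ y ∈ zono V, w' y ≤ w' x}).direction := by rw [heq]
    rw [face_direction, face_direction] at h1
    have h2 : ξ ∈ Submodule.span ℝ
        ((V.filter (fun v => w v = 0) : Finset (Fin n → ℝ)) : Set (Fin n → ℝ)) := by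
      apply Submodule.subset_span
      rw [Finset.mem_coe, Finset.mem_filter]
      exact ⟨hξV, hwξ⟩
    rw [h1] at h2
    have h3 : Submodule.span ℝ
        ((V.filter (fun v => w' v = 0) : Finset (Fin n → ℝ)) : Set (Fin n → ℝ))
        ≤ LinearMap.ker w' := by
      rw [Submodule.span_le]
      intro v hv
      rw [Finset.mem_coe, Finset.mem_filter] at hv
      exact hv.2
    exact hw'ξ (h3 h2)
  -- the six functionals
  set a₁ : ℝ := B.repr v₀ i₁ with ha₁
  set a₂ : ℝ := B.repr v₀ i₂ with ha₂
  set w1 : (Fin n → ℝ) →ₗ[ℝ] ℝ := φ i₂ with hw1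
  set w1' : (Fin n → ℝ) →ₗ[ℝ] ℝ := -φ i₂ with hw1'
  set w2 : (Fin n → ℝ) →ₗ[ℝ] ℝ := φ i₁ with hw2
  set w2' : (Fin n → ℝ) →ₗ[ℝ] ℝ := -φ i₁ with hw2'
  set w3 : (Fin n → ℝ) →ₗ[ℝ] ℝ := a₂ • φ i₁ - a₁ • φ i₂ with hw3
  set w3' : (Fin n → ℝ) →ₗ[ℝ] ℝ := a₁ • φ i₂ - a₂ • φ i₁ with hw3'
  have ha₁ne : a₁ ≠ 0 := hi₁
  have ha₂ne : a₂ ≠ 0 := hi₂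
  have hi₁₂ : i₁ ≠ i₂ := Ne.symm hi₂₁
  -- evaluations
  have e11 : w1 (B i₁) = 0 := by rw [hw1, hφB, if_neg hi₁₂]
  have e12 : w1 (B i₂) = 1 := by rw [hw1, hφB, if_pos rfl]
  have e21 : w2 (B i₁) = 1 := by rw [hw2, hφB, if_pos rfl]
  have e22 : w2 (B i₂) = 0 := by rw [hw2, hφB, if_neg hi₂₁]
  have hw3app : ∀ x, w3 x = a₂ * φ i₁ x - a₁ * φ i₂ x := by
    intro x; simp [hw3]
  have e31 : w3 (B i₁) = a₂ := by
    rw [hw3app, hφB, hφB, if_pos rfl, if_neg hi₁₂]; ring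
  have e32 : w3 (B i₂) = -a₁ := by
    rw [hw3app, hφB, hφB, if_neg hi₂₁, if_pos rfl]; ring
  have e3v : w3 v₀ = 0 := by
    rw [hw3app, hφrepr, hφrepr, ← ha₁, ← ha₂]; ring
  have hw1'x : ∀ x, w1' x = -(w1 x) := by intro x; simp [hw1', hw1]
  have hw2'x : ∀ x, w2' x = -(w2 x) := by intro x; simp [hw2', hw2]
  have hw3'x : ∀ x, w3' x = -(w3 x) := by
    intro x; rw [hw3app]; simp [hw3']
  -- nonmembership in K
  have hBi₁K : B i₁ ∉ K := by
    intro h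
    have h2 := hKker i₁ (Or.inl rfl) h
    rw [LinearMap.mem_ker, hφB, if_pos rfl] at h2
    norm_num at h2
  have hBi₂K : B i₂ ∉ K := by
    intro h
    have h2 := hKker i₂ (Or.inr rfl) h
    rw [LinearMap.mem_ker, hφB, if_pos rfl] at h2
    norm_num at h2
  have hv₀K : v₀ ∉ K := by
    intro h
    have h2 := hKker i₁ (Or.inl rfl) h
    rw [LinearMap.mem_ker, hφrepr] at h2
    exact hi₁ h2
  have hne0 : ∀ (w : (Fin n → ℝ) →ₗ[ℝ] ℝ) (x : Fin n → ℝ), w x ≠ 0 → w ≠ 0 := by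
    intro w x hx h
    apply hx
    rw [h]
    simp
  -- belt memberships
  have hb1 : {x ∈ zono V | ∀ y ∈ zono V, w1 y ≤ w1 x} ∈ belt (zono V) G :=
    hfacet w1 (B i₁) (fun v hv h0 => (hukey v hv h0).2)
      (fun j _ hj2 => by rw [hw1, hφB, if_neg hj2]) (hB i₁) e11 hBi₁K
      (hne0 w1 (B i₂) (by rw [e12]; norm_num))
  have hb1' : {x ∈ zono V | ∀ y ∈ zono V, w1' y ≤ w1' x} ∈ belt (zono V) G :=
    hfacet w1' (B i₁) (fun v hv h0 => by rw [hw1'x, (hukey v hv h0).2]; ring)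
      (fun j _ hj2 => by rw [hw1'x, hw1, hφB, if_neg hj2]; ring) (hB i₁)
      (by rw [hw1'x, e11]; ring) hBi₁K
      (hne0 w1' (B i₂) (by rw [hw1'x, e12]; norm_num))
  have hb2 : {x ∈ zono V | ∀ y ∈ zono V, w2 y ≤ w2 x} ∈ belt (zono V) G :=
    hfacet w2 (B i₂) (fun v hv h0 => (hukey v hv h0).1)
      (fun j hj1 _ => by rw [hw2, hφB, if_neg hj1]) (hB i₂) e22 hBi₂K
      (hne0 w2 (B i₁) (by rw [e21]; norm_num))
  have hb2' : {x ∈ zono V | ∀ y ∈ zono V, w2' y ≤ w2' x} ∈ belt (zono V) G :=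
    hfacet w2' (B i₂) (fun v hv h0 => by rw [hw2'x, (hukey v hv h0).1]; ring)
      (fun j hj1 _ => by rw [hw2'x, hw2, hφB, if_neg hj1]; ring) (hB i₂)
      (by rw [hw2'x, e22]; ring) hBi₂K
      (hne0 w2' (B i₁) (by rw [hw2'x, e21]; norm_num))
  have hb3 : {x ∈ zono V | ∀ y ∈ zono V, w3 y ≤ w3 x} ∈ belt (zono V) G :=
    hfacet w3 v₀ (fun v hv h0 => by
        rw [hw3app, (hukey v hv h0).1, (hukey v hv h0).2]; ring)
      (fun j hj1 hj2 => by rw [hw3app, hφB, hφB, if_neg hj1, if_neg hj2]; ring)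
      hv₀V e3v hv₀K (hne0 w3 (B i₁) (by rw [e31]; exact ha₂ne))
  have hb3' : {x ∈ zono V | ∀ y ∈ zono V, w3' y ≤ w3' x} ∈ belt (zono V) G :=
    hfacet w3' v₀ (fun v hv h0 => by
        rw [hw3'x, hw3app, (hukey v hv h0).1, (hukey v hv h0).2]; ring)
      (fun j hj1 hj2 => by rw [hw3'x, hw3app, hφB, hφB, if_neg hj1, if_neg hj2]; ring)
      hv₀V (by rw [hw3'x, e3v]; ring) hv₀K
      (hne0 w3' (B i₁) (by rw [hw3'x, e31]; simpa using ha₂ne))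
  -- abbreviations for the six faces
  set s1 := {x ∈ zono V | ∀ y ∈ zono V, w1 y ≤ w1 x} with hs1
  set s2 := {x ∈ zono V | ∀ y ∈ zono V, w1' y ≤ w1' x} with hs2
  set s3 := {x ∈ zono V | ∀ y ∈ zono V, w2 y ≤ w2 x} with hs3
  set s4 := {x ∈ zono V | ∀ y ∈ zono V, w2' y ≤ w2' x} with hs4
  set s5 := {x ∈ zono V | ∀ y ∈ zono V, w3 y ≤ w3 x} with hs5
  set s6 := {x ∈ zono V | ∀ y ∈ zono V, w3' y ≤ w3' x} with hs6
  -- pairwise distinctness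
  have h12 : s1 ≠ s2 := face_ne_neg w1 w1' V hw1'x (hB i₂) (by rw [e12]; norm_num)
  have h34 : s3 ≠ s4 := face_ne_neg w2 w2' V hw2'x (hB i₁) (by rw [e21]; norm_num)
  have h56 : s5 ≠ s6 := face_ne_neg w3 w3' V hw3'x (hB i₁) (by rw [e31]; exact ha₂ne)
  have h13 : s1 ≠ s3 := hdir_ne w1 w2 (B i₁) (hB i₁) e11 (by rw [e21]; norm_num)
  have h14 : s1 ≠ s4 := hdir_ne w1 w2' (B i₁) (hB i₁) e11 (by rw [hw2'x, e21]; norm_num)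
  have h15 : s1 ≠ s5 := hdir_ne w1 w3 (B i₁) (hB i₁) e11 (by rw [e31]; exact ha₂ne)
  have h16 : s1 ≠ s6 := hdir_ne w1 w3' (B i₁) (hB i₁) e11
    (by rw [hw3'x, e31]; simpa using ha₂ne)
  have h23 : s2 ≠ s3 := hdir_ne w1' w2 (B i₁) (hB i₁) (by rw [hw1'x, e11]; ring)
    (by rw [e21]; norm_num)
  have h24 : s2 ≠ s4 := hdir_ne w1' w2' (B i₁) (hB i₁) (by rw [hw1'x, e11]; ring)
    (by rw [hw2'x, e21]; norm_num)
  have h25 : s2 ≠ s5 := hdir_ne w1' w3 (B i₁) (hB i₁) (by rw [hw1'x, e11]; ring)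
    (by rw [e31]; exact ha₂ne)
  have h26 : s2 ≠ s6 := hdir_ne w1' w3' (B i₁) (hB i₁) (by rw [hw1'x, e11]; ring)
    (by rw [hw3'x, e31]; simpa using ha₂ne)
  have h35 : s3 ≠ s5 := hdir_ne w2 w3 (B i₂) (hB i₂) e22
    (by rw [e32]; simpa using ha₁ne)
  have h36 : s3 ≠ s6 := hdir_ne w2 w3' (B i₂) (hB i₂) e22
    (by rw [hw3'x, e32]; simpa using ha₁ne)
  have h45 : s4 ≠ s5 := hdir_ne w2' w3 (B i₂) (hB i₂) (by rw [hw2'x, e22]; ring)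
    (by rw [e32]; simpa using ha₁ne)
  have h46 : s4 ≠ s6 := hdir_ne w2' w3' (B i₂) (hB i₂) (by rw [hw2'x, e22]; ring)
    (by rw [hw3'x, e32]; simpa using ha₁ne)
  -- counting
  have hsub : ({s1, s2, s3, s4, s5, s6} : Set (Set (Fin n → ℝ))) ⊆ belt (zono V) G := by
    intro x hx
    simp only [Set.mem_insert_iff, Set.mem_singleton_iff] at hx
    rcases hx with rfl | rfl | rfl | rfl | rfl | rfl
    exacts [hb1, hb1', hb2, hb2', hb3, hb3']
  have hfin : (belt (zono V) G).Finite :=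
    Set.finite_of_ncard_ne_zero (by rw [h4]; norm_num)
  have fin1 : ({s6} : Set (Set (Fin n → ℝ))).Finite := Set.finite_singleton _
  have fin2 := fin1.insert s5
  have fin3 := fin2.insert s4
  have fin4 := fin3.insert s3
  have fin5 := fin4.insert s2
  have hcard6 : ({s1, s2, s3, s4, s5, s6} : Set (Set (Fin n → ℝ))).ncard = 6 := by
    rw [Set.ncard_insert_of_notMem (by simp [h12, h13, h14, h15, h16]) fin5,
        Set.ncard_insert_of_notMem (by simp [h23, h24, h25, h26]) fin4,
        Set.ncard_insert_of_notMem (by simp [h34, h35, h36]) fin3,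
        Set.ncard_insert_of_notMem (by simp [h45, h46]) fin2,
        Set.ncard_insert_of_notMem (by simp [h56]) fin1,
        Set.ncard_singleton]
  have hle := Set.ncard_le_ncard hsub hfin
  rw [h4, hcard6] at hle
  omega

theorem stmt19 (n : ℕ) (hn : 3 ≤ n) (V : Finset (Fin n → ℝ))
    (hspan : Submodule.span ℝ (V : Set (Fin n → ℝ)) = ⊤)
    (hbelt : ∀ G : Set (Fin n → ℝ), IsFace (zono V) G → G.Nonempty → adim G = n - 2 →
      (belt (zono V) G).ncard = 4) :
    ∃ A : (Fin n → ℝ) ≃ₗ[ℝ] (Fin n → ℝ),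
      zono V = ⇑A '' {x : Fin n → ℝ | ∀ i, |x i| ≤ 1} := by
  obtain ⟨B, hB⟩ := exists_basis_subset V hspan
  by_cases hpar : ∀ v ∈ V, ∃ i : Fin n, ∃ c : ℝ, v = c • B i
  · exact case_parallel (by omega) V B hB hpar
  · exfalso
    push_neg at hpar
    obtain ⟨v₀, hv₀V, hv₀⟩ := hpar
    exact case_nonparallel hn V B hB v₀ hv₀V hv₀ hbelt
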